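/- arXiv:2404.19499 — 5 statements merged into one kernel-verified Lean document; each statement's English description precedes it below -/
import Mathlib

section
/- Let μ and ν be Borel probability measures on ℝ^d with finite p-th moment (p ∈ [1,∞)) that are absolutely continuous with respect to Lebesgue measure, with densities ℓ_μ and ℓ_ν. Then the p-th power of the Wasserstein distance satisfies W_p(μ,ν)^p ≤ max(1, 2^{p-1}) · ∫_{ℝ^d} |x|^p · |ℓ_μ(x) − ℓ_ν(x)| dx. -/
open MeasureTheory
open scoped ENNReal

/-- The `p`-Wasserstein distance, defined as the infimum over couplings of the `p`-th root of
the `p`-th cost. -/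
noncomputable def Wp {d : ℕ} (p : ℝ)
    (μ ν : Measure (EuclideanSpace ℝ (Fin d))) : ℝ :=
  sInf {c : ℝ | ∃ γ : Measure (EuclideanSpace ℝ (Fin d) × EuclideanSpace ℝ (Fin d)),
    IsProbabilityMeasure γ ∧ γ.map Prod.fst = μ ∧ γ.map Prod.snd = ν ∧
    c = (∫ z, ‖z.1 - z.2‖ ^ p ∂γ) ^ (1 / p)}

theorem stmt0 (d : ℕ) (p : ℝ) (hp : 1 ≤ p)
    (μ ν : Measure (EuclideanSpace ℝ (Fin d)))
    [IsProbabilityMeasure μ] [IsProbabilityMeasure ν]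
    (ℓμ ℓν : EuclideanSpace ℝ (Fin d) → ℝ)
    (hℓμ : Measurable ℓμ) (hℓν : Measurable ℓν)
    (hℓμ0 : ∀ x, 0 ≤ ℓμ x) (hℓν0 : ∀ x, 0 ≤ ℓν x)
    (hμ : μ = volume.withDensity (fun x => ENNReal.ofReal (ℓμ x)))
    (hν : ν = volume.withDensity (fun x => ENNReal.ofReal (ℓν x)))
    (hmμ : ∫⁻ x, ENNReal.ofReal (‖x‖ ^ p) ∂μ ≠ ⊤)
    (hmν : ∫⁻ x, ENNReal.ofReal (‖x‖ ^ p) ∂ν ≠ ⊤) :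
    Wp p μ ν ^ p ≤ max 1 (2 ^ (p - 1)) * ∫ x, ‖x‖ ^ p * |ℓμ x - ℓν x| := by
  have hp0 : (0:ℝ) < p := lt_of_lt_of_le one_pos hp
  have hpne : p ≠ 0 := ne_of_gt hp0
  -- the weight function
  set f : (EuclideanSpace ℝ (Fin d)) → ℝ≥0∞ := fun x => ENNReal.ofReal (‖x‖ ^ p) with hf_def
  have hfc : Continuous fun x : (EuclideanSpace ℝ (Fin d)) => ‖x‖ ^ p :=
    continuous_norm.rpow_const (fun _ => Or.inr hp0.le)
  have hf : Measurable f := hfc.measurable.ennreal_ofReal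
  -- the cost function
  have hcostc : Continuous fun z : (EuclideanSpace ℝ (Fin d)) × (EuclideanSpace ℝ (Fin d)) => ‖z.1 - z.2‖ ^ p :=
    ((continuous_fst.sub continuous_snd).norm).rpow_const (fun _ => Or.inr hp0.le)
  have hcost : Measurable fun z : (EuclideanSpace ℝ (Fin d)) × (EuclideanSpace ℝ (Fin d)) => ENNReal.ofReal (‖z.1 - z.2‖ ^ p) :=
    hcostc.measurable.ennreal_ofReal
  -- the three densities
  set m : Measure (EuclideanSpace ℝ (Fin d)) := volume.withDensity (fun x => ENNReal.ofReal (min (ℓμ x) (ℓν x))) with hm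
  set μ' : Measure (EuclideanSpace ℝ (Fin d)) := volume.withDensity (fun x => ENNReal.ofReal (ℓμ x - ℓν x)) with hμ'
  set ν' : Measure (EuclideanSpace ℝ (Fin d)) := volume.withDensity (fun x => ENNReal.ofReal (ℓν x - ℓμ x)) with hν'
  have hminm : Measurable fun x => ENNReal.ofReal (min (ℓμ x) (ℓν x)) :=
    (hℓμ.min hℓν).ennreal_ofReal
  have hμ'm : Measurable fun x => ENNReal.ofReal (ℓμ x - ℓν x) :=
    (hℓμ.sub hℓν).ennreal_ofReal
  have hν'm : Measurable fun x => ENNReal.ofReal (ℓν x - ℓμ x) :=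
    (hℓν.sub hℓμ).ennreal_ofReal
  -- splitting of μ and ν
  have hsplitμ : μ = m + μ' := by
    rw [hμ, hm, hμ', ← withDensity_add_right _ hμ'm]
    congr 1
    funext x
    simp only [Pi.add_apply]
    rcases le_total (ℓν x) (ℓμ x) with h | h
    · rw [min_eq_right h, ← ENNReal.ofReal_add (hℓν0 x) (by linarith)]
      congr 1
      ring
    · rw [min_eq_left h, ENNReal.ofReal_eq_zero.2 (show ℓμ x - ℓν x ≤ 0 by linarith), add_zero]
  have hsplitν : ν = m + ν' := by
    rw [hν, hm, hν', ← withDensity_add_right _ hν'm]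
    congr 1
    funext x
    simp only [Pi.add_apply]
    rcases le_total (ℓμ x) (ℓν x) with h | h
    · rw [min_eq_left h, ← ENNReal.ofReal_add (hℓμ0 x) (by linarith)]
      congr 1
      ring
    · rw [min_eq_right h, ENNReal.ofReal_eq_zero.2 (show ℓν x - ℓμ x ≤ 0 by linarith), add_zero]
  have hμ'le : μ' ≤ μ := by rw [hsplitμ]; exact Measure.le_add_left le_rfl
  have hν'le : ν' ≤ ν := by rw [hsplitν]; exact Measure.le_add_left le_rfl
  have hmle : m ≤ μ := by rw [hsplitμ]; exact Measure.le_add_right le_rfl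
  set β : ℝ≥0∞ := μ' Set.univ with hβ
  have hβ1 : β ≤ 1 := by
    calc β ≤ μ Set.univ := hμ'le Set.univ
    _ = 1 := measure_univ
  have hβtop : β ≠ ⊤ := (lt_of_le_of_lt hβ1 ENNReal.one_lt_top).ne
  have hmuniv : m Set.univ ≠ ⊤ := by
    refine (lt_of_le_of_lt (le_trans (hmle Set.univ) ?_) ENNReal.one_lt_top).ne
    simp [measure_univ]
  have hβν : ν' Set.univ = β := by
    have h1 : m Set.univ + μ' Set.univ = 1 := by
      rw [← Measure.add_apply, ← hsplitμ, measure_univ]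
    have h2 : m Set.univ + ν' Set.univ = 1 := by
      rw [← Measure.add_apply, ← hsplitν, measure_univ]
    rw [hβ]
    exact (ENNReal.add_right_inj hmuniv).mp (h2.trans h1.symm)
  haveI : IsFiniteMeasure μ' := ⟨lt_of_le_of_lt hβ1 ENNReal.one_lt_top⟩
  haveI : IsFiniteMeasure ν' := ⟨by rw [hβν]; exact lt_of_le_of_lt hβ1 ENNReal.one_lt_top⟩
  -- the coupling
  have hdiag : Measurable fun x : (EuclideanSpace ℝ (Fin d)) => (x, x) := measurable_id.prodMk measurable_id
  set γ : Measure ((EuclideanSpace ℝ (Fin d)) × (EuclideanSpace ℝ (Fin d))) := m.map (fun x => (x, x)) + β⁻¹ • (μ'.prod ν') with hγ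
  -- marginals
  have hfst : γ.map Prod.fst = μ := by
    rw [hγ, Measure.map_add _ _ measurable_fst, Measure.map_smul,
      Measure.map_fst_prod, Measure.map_map measurable_fst hdiag]
    have : (Prod.fst ∘ fun x : (EuclideanSpace ℝ (Fin d)) => (x, x)) = id := rfl
    rw [this, Measure.map_id, hβν, smul_smul]
    by_cases hβ0 : β = 0
    · have hμ'0 : μ' = 0 := by
        apply Measure.measure_univ_eq_zero.mp
        rw [← hβ, hβ0]
      rw [hμ'0, smul_zero, hsplitμ, hμ'0, add_zero]
    · rw [ENNReal.inv_mul_cancel hβ0 hβtop, one_smul, hsplitμ]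
  have hsnd : γ.map Prod.snd = ν := by
    rw [hγ, Measure.map_add _ _ measurable_snd, Measure.map_smul,
      Measure.map_snd_prod, Measure.map_map measurable_snd hdiag]
    have : (Prod.snd ∘ fun x : (EuclideanSpace ℝ (Fin d)) => (x, x)) = id := rfl
    rw [this, Measure.map_id, ← hβ, smul_smul]
    by_cases hβ0 : β = 0
    · have hν'0 : ν' = 0 := by
        apply Measure.measure_univ_eq_zero.mp
        rw [hβν, hβ0]
      rw [hν'0, smul_zero, hsplitν, hν'0, add_zero]
    · rw [ENNReal.inv_mul_cancel hβ0 hβtop, one_smul, hsplitν]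
  have hprob : IsProbabilityMeasure γ := by
    constructor
    have h1 : (γ.map Prod.fst) Set.univ = γ Set.univ := by
      rw [Measure.map_apply measurable_fst MeasurableSet.univ, Set.preimage_univ]
    rw [← h1, hfst, measure_univ]
  -- lintegral quantities
  set A : ℝ≥0∞ := ∫⁻ x, f x ∂μ' with hA
  set B : ℝ≥0∞ := ∫⁻ x, f x ∂ν' with hB
  set K : ℝ≥0∞ := A + B with hK
  have hAle : A ≤ ∫⁻ x, ENNReal.ofReal (‖x‖ ^ p) ∂μ := lintegral_mono' hμ'le le_rfl
  have hBle : B ≤ ∫⁻ x, ENNReal.ofReal (‖x‖ ^ p) ∂ν := lintegral_mono' hν'le le_rfl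
  have hKfin : K ≠ ⊤ := by
    apply ENNReal.add_ne_top.2
    constructor
    · exact (lt_of_le_of_lt hAle (lt_top_iff_ne_top.2 hmμ)).ne
    · exact (lt_of_le_of_lt hBle (lt_top_iff_ne_top.2 hmν)).ne
  -- identification of K with the statement's integral
  have hKI : K = ∫⁻ x, ENNReal.ofReal (‖x‖ ^ p * |ℓμ x - ℓν x|) ∂volume := by
    rw [hK, hA, hB, hμ', hν', lintegral_withDensity_eq_lintegral_mul _ hμ'm hf,
      lintegral_withDensity_eq_lintegral_mul _ hν'm hf]
    simp only [Pi.mul_apply]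
    rw [← lintegral_add_left (show Measurable fun x => ENNReal.ofReal (ℓμ x - ℓν x) * f x from hμ'm.mul hf)]
    congr 1
    funext x
    have habs : ENNReal.ofReal (ℓμ x - ℓν x) + ENNReal.ofReal (ℓν x - ℓμ x)
        = ENNReal.ofReal (|ℓμ x - ℓν x|) := by
      rcases le_total (ℓν x) (ℓμ x) with h | h
      · rw [abs_of_nonneg (show (0:ℝ) ≤ ℓμ x - ℓν x by linarith),
          ENNReal.ofReal_eq_zero.2 (show ℓν x - ℓμ x ≤ 0 by linarith), add_zero]
      · rw [abs_of_nonpos (show ℓμ x - ℓν x ≤ 0 by linarith), neg_sub,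
          ENNReal.ofReal_eq_zero.2 (show ℓμ x - ℓν x ≤ 0 by linarith), zero_add]
    simp only [Pi.mul_apply, hf_def]
    rw [← add_mul, habs, ← ENNReal.ofReal_mul (abs_nonneg _), mul_comm]
  have hI : (∫ x, ‖x‖ ^ p * |ℓμ x - ℓν x|) = K.toReal := by
    rw [MeasureTheory.integral_eq_lintegral_of_nonneg_ae
      (Filter.Eventually.of_forall fun x =>
        mul_nonneg (Real.rpow_nonneg (norm_nonneg _) _) (abs_nonneg _))
      ((show Measurable fun x => ‖x‖ ^ p * |ℓμ x - ℓν x| from hfc.measurable.mul ((hℓμ.sub hℓν).abs)).aestronglyMeasurable), hKI]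
  have hInn : 0 ≤ ∫ x, ‖x‖ ^ p * |ℓμ x - ℓν x| := by rw [hI]; exact ENNReal.toReal_nonneg
  -- lintegral of the cost over γ
  set L : ℝ≥0∞ := ∫⁻ z, ENNReal.ofReal (‖z.1 - z.2‖ ^ p) ∂γ with hL_def
  -- bound on L
  have hββ : β⁻¹ * β ≤ 1 := by
    by_cases hβ0 : β = 0
    · simp [hβ0]
    · rw [ENNReal.inv_mul_cancel hβ0 hβtop]
  have hpoint : ∀ z : (EuclideanSpace ℝ (Fin d)) × (EuclideanSpace ℝ (Fin d)), ENNReal.ofReal (‖z.1 - z.2‖ ^ p)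
      ≤ (2 : ℝ≥0∞) ^ (p - 1) * (f z.1 + f z.2) := by
    intro z
    simp only [hf_def]
    rw [← ENNReal.ofReal_rpow_of_nonneg (norm_nonneg _) hp0.le,
      ← ENNReal.ofReal_rpow_of_nonneg (norm_nonneg _) hp0.le,
      ← ENNReal.ofReal_rpow_of_nonneg (norm_nonneg _) hp0.le]
    calc ENNReal.ofReal ‖z.1 - z.2‖ ^ p
        ≤ (ENNReal.ofReal ‖z.1‖ + ENNReal.ofReal ‖z.2‖) ^ p := by
          apply ENNReal.rpow_le_rpow _ hp0.le
          rw [← ENNReal.ofReal_add (norm_nonneg _) (norm_nonneg _)]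
          exact ENNReal.ofReal_le_ofReal (norm_sub_le _ _)
      _ ≤ (2 : ℝ≥0∞) ^ (p - 1) * (ENNReal.ofReal ‖z.1‖ ^ p + ENNReal.ofReal ‖z.2‖ ^ p) :=
          ENNReal.rpow_add_le_mul_rpow_add_rpow _ _ hp
  have h1 : (∫⁻ z, f z.1 ∂(μ'.prod ν')) = β * A := by
    rw [← lintegral_map hf measurable_fst, Measure.map_fst_prod, hβν,
      lintegral_smul_measure, hA, smul_eq_mul]
  have h2 : (∫⁻ z, f z.2 ∂(μ'.prod ν')) = β * B := by
    rw [← lintegral_map hf measurable_snd, Measure.map_snd_prod, ← hβ,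
      lintegral_smul_measure, hB, smul_eq_mul]
  have hJ : (∫⁻ z, ENNReal.ofReal (‖z.1 - z.2‖ ^ p) ∂(μ'.prod ν'))
      ≤ (2 : ℝ≥0∞) ^ (p - 1) * (β * K) := by
    calc (∫⁻ z, ENNReal.ofReal (‖z.1 - z.2‖ ^ p) ∂(μ'.prod ν'))
        ≤ ∫⁻ z, (2 : ℝ≥0∞) ^ (p - 1) * (f z.1 + f z.2) ∂(μ'.prod ν') :=
          lintegral_mono hpoint
      _ = (2 : ℝ≥0∞) ^ (p - 1) * ∫⁻ z, (f z.1 + f z.2) ∂(μ'.prod ν') :=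
          lintegral_const_mul _ (show Measurable fun z : (EuclideanSpace ℝ (Fin d)) × (EuclideanSpace ℝ (Fin d)) => f z.1 + f z.2 from
            (hf.comp measurable_fst).add (hf.comp measurable_snd))
      _ = (2 : ℝ≥0∞) ^ (p - 1) * (β * A + β * B) := by
          rw [lintegral_add_left (show Measurable fun z : (EuclideanSpace ℝ (Fin d)) × (EuclideanSpace ℝ (Fin d)) => f z.1 from
            hf.comp measurable_fst), h1, h2]
      _ = (2 : ℝ≥0∞) ^ (p - 1) * (β * K) := by rw [hK]; ring
  have hLbound : L ≤ (2 : ℝ≥0∞) ^ (p - 1) * K := by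
    rw [hL_def, hγ, lintegral_add_measure, lintegral_smul_measure,
      lintegral_map hcost hdiag]
    have hzero : (∫⁻ x, ENNReal.ofReal (‖x - x‖ ^ p) ∂m) = 0 := by
      simp [Real.zero_rpow hpne]
    rw [hzero, zero_add]
    calc β⁻¹ * ∫⁻ z, ENNReal.ofReal (‖z.1 - z.2‖ ^ p) ∂(μ'.prod ν')
        ≤ β⁻¹ * ((2 : ℝ≥0∞) ^ (p - 1) * (β * K)) := mul_le_mul_right hJ _
      _ = (β⁻¹ * β) * ((2 : ℝ≥0∞) ^ (p - 1) * K) := by ring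
      _ ≤ 1 * ((2 : ℝ≥0∞) ^ (p - 1) * K) := mul_le_mul_left hββ _
      _ = (2 : ℝ≥0∞) ^ (p - 1) * K := one_mul _
  -- the real cost integral
  have hcostint : (∫ z, ‖z.1 - z.2‖ ^ p ∂γ) = L.toReal := by
    rw [MeasureTheory.integral_eq_lintegral_of_nonneg_ae
      (Filter.Eventually.of_forall fun z => Real.rpow_nonneg (norm_nonneg _) _)
      hcostc.measurable.aestronglyMeasurable, hL_def]
  -- Wp is at most the cost of γ
  have hset_nonneg : ∀ c ∈ {c : ℝ | ∃ γ : Measure ((EuclideanSpace ℝ (Fin d)) × (EuclideanSpace ℝ (Fin d))),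
      IsProbabilityMeasure γ ∧ γ.map Prod.fst = μ ∧ γ.map Prod.snd = ν ∧
      c = (∫ z, ‖z.1 - z.2‖ ^ p ∂γ) ^ (1 / p)}, 0 ≤ c := by
    rintro c ⟨γ', _, _, _, rfl⟩
    exact Real.rpow_nonneg
      (integral_nonneg fun z => Real.rpow_nonneg (norm_nonneg _) _) _
  have hmem : (L.toReal) ^ (1 / p) ∈ {c : ℝ | ∃ γ : Measure ((EuclideanSpace ℝ (Fin d)) × (EuclideanSpace ℝ (Fin d))),
      IsProbabilityMeasure γ ∧ γ.map Prod.fst = μ ∧ γ.map Prod.snd = ν ∧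
      c = (∫ z, ‖z.1 - z.2‖ ^ p ∂γ) ^ (1 / p)} :=
    ⟨γ, hprob, hfst, hsnd, by rw [hcostint]⟩
  have hWple : Wp p μ ν ≤ L.toReal ^ (1 / p) :=
    csInf_le ⟨0, fun c hc => hset_nonneg c hc⟩ hmem
  have hWp0 : 0 ≤ Wp p μ ν := Real.sInf_nonneg hset_nonneg
  have hWpp : Wp p μ ν ^ p ≤ L.toReal := by
    have h := Real.rpow_le_rpow hWp0 hWple hp0.le
    rwa [← Real.rpow_mul ENNReal.toReal_nonneg, one_div_mul_cancel hpne,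
      Real.rpow_one] at h
  -- conclude
  have h2K : ((2 : ℝ≥0∞) ^ (p - 1) * K).toReal
      = 2 ^ (p - 1) * ∫ x, ‖x‖ ^ p * |ℓμ x - ℓν x| := by
    rw [ENNReal.toReal_mul, ← ENNReal.toReal_rpow, hI]
    norm_num
  calc Wp p μ ν ^ p ≤ L.toReal := hWpp
    _ ≤ ((2 : ℝ≥0∞) ^ (p - 1) * K).toReal := by
        apply ENNReal.toReal_mono _ hLbound
        exact ENNReal.mul_ne_top
          (ENNReal.rpow_ne_top_of_nonneg (by linarith) ENNReal.ofNat_ne_top) hKfin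
    _ = 2 ^ (p - 1) * ∫ x, ‖x‖ ^ p * |ℓμ x - ℓν x| := h2K
    _ ≤ max 1 (2 ^ (p - 1)) * ∫ x, ‖x‖ ^ p * |ℓμ x - ℓν x| :=
        mul_le_mul_of_nonneg_right (le_max_right _ _) hInn
end

section
/- Let X be a random vector in ℝ^d whose law is bounded above by c·(p_t^{0,λ} * ν) for some constant c > 0, λ ∈ (0,1), t ∈ (0,T], where p_t^{0,λ}(x) = t^{−d/2} e^{−λ|x|²/t} and ν is a probability measure with finite p-th moment. Then for each p ∈ [1,∞) there exists a function φ : ℝ₊ → ℝ₊ with φ(R) → 0 as R → ∞ such that ∫_{|x|>R} |x|^p dμ_X(x) ≤ φ(R), uniformly over t ∈ (0,T]. -/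
open MeasureTheory Filter Real

lemma aux_sup (q : ℝ) (hq : 0 ≤ q) : ∃ C : ℝ, 0 < C ∧ ∀ u : ℝ, 0 ≤ u → u ^ q * Real.exp (-u) ≤ C := by
  set n : ℕ := ⌈q⌉₊ with hn
  refine ⟨1 + (2 * n + 1) ^ n, by positivity, fun u hu => ?_⟩
  rcases le_or_gt u 1 with h1 | h1
  · have h2 : u ^ q ≤ 1 := Real.rpow_le_one hu h1 hq
    have h3 : Real.exp (-u) ≤ 1 := Real.exp_le_one_iff.mpr (by linarith)
    nlinarith [Real.exp_pos (-u), Real.rpow_nonneg hu q, pow_nonneg (by positivity : (0:ℝ) ≤ 2*n+1) n]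
  · have h2 : u ^ q ≤ u ^ (n : ℝ) :=
      Real.rpow_le_rpow_of_exponent_le h1.le (Nat.le_ceil q)
    rw [Real.rpow_natCast] at h2
    rcases Nat.eq_zero_or_pos n with h0 | h0
    · have h3 : Real.exp (-u) ≤ 1 := Real.exp_le_one_iff.mpr (by linarith)
      simp only [h0, pow_zero] at h2 ⊢
      nlinarith [Real.exp_pos (-u), Real.rpow_nonneg hu q]
    · -- u^n * exp (-u) ≤ n^n
      have hnpos : (0:ℝ) < n := by exact_mod_cast h0
      have key : (u / n) ^ n ≤ Real.exp u := by
        calc (u / n) ^ n ≤ Real.exp (u / n) ^ n := by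
              apply pow_le_pow_left₀ (by positivity)
              linarith [Real.add_one_le_exp (u / n)]
          _ = Real.exp u := by
              rw [← Real.exp_nat_mul]
              congr 1
              field_simp
      have hexp : Real.exp (-u) ≤ (n / u) ^ n := by
        rw [Real.exp_neg]
        rw [inv_le_iff_one_le_mul₀ (Real.exp_pos u)]
        calc (1:ℝ) = (u / n)^n * (n / u)^n := by
              rw [← mul_pow]
              rw [div_mul_div_comm, mul_comm u (n:ℝ), div_self (by positivity), one_pow]
          _ ≤ Real.exp u * (n/u)^n := by
              apply mul_le_mul_of_nonneg_right key (by positivity)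
          _ = (n/u)^n * Real.exp u := mul_comm _ _
      have : u ^ q * Real.exp (-u) ≤ u ^ n * ((n:ℝ) / u) ^ n := by
        apply mul_le_mul h2 hexp (Real.exp_pos _).le (by positivity)
      calc u ^ q * Real.exp (-u) ≤ u ^ n * ((n:ℝ)/u)^n := this
        _ = (n:ℝ)^n := by
            rw [← mul_pow, mul_div_cancel₀ _ (by positivity : u ≠ 0)]
        _ ≤ (2*n+1)^n := by
            apply pow_le_pow_left₀ (by positivity)
            nlinarith [hnpos]
        _ ≤ 1 + (2*n+1)^n := by linarith

lemma aux_2pow (p a b : ℝ) (hp : 0 ≤ p) (ha : 0 ≤ a) (hb : 0 ≤ b) :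
    (a + b) ^ p ≤ 2 ^ p * (a ^ p + b ^ p) := by
  have h1 : a + b ≤ 2 * max a b := by
    rcases max_cases a b with ⟨h, h'⟩ | ⟨h, h'⟩ <;> rw [h] <;> linarith
  calc (a+b)^p ≤ (2 * max a b) ^ p :=
        Real.rpow_le_rpow (by positivity) h1 hp
    _ = 2 ^ p * (max a b) ^ p := Real.mul_rpow (by norm_num) (le_max_of_le_left ha)
    _ ≤ 2 ^ p * (a ^ p + b ^ p) := by
        apply mul_le_mul_of_nonneg_left _ (by positivity)
        rcases max_cases a b with ⟨h, h'⟩ | ⟨h, h'⟩ <;> rw [h]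
        · nlinarith [Real.rpow_nonneg hb p]
        · nlinarith [Real.rpow_nonneg ha p]

lemma gauss_integrable (d : ℕ) (a : ℝ) (ha : 0 < a) :
    Integrable (fun z : EuclideanSpace ℝ (Fin d) => Real.exp (-a * ‖z‖^2)) := by
  have h := (GaussianFourier.integrable_cexp_neg_mul_sq_norm_add
    (V := EuclideanSpace ℝ (Fin d)) (b := (a : ℂ)) (by simpa using ha) 0 0).re
  apply h.congr
  refine Eventually.of_forall fun z => ?_
  simp only [zero_mul, add_zero, inner_zero_left, Complex.ofReal_zero, mul_zero]
  rw [show (-(a:ℂ) * (‖z‖:ℂ)^2) = ((-a * ‖z‖^2 : ℝ) : ℂ) by push_cast; ring]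
  exact Complex.exp_ofReal_re _

lemma gauss_lint (d : ℕ) (a : ℝ) (ha : 0 < a) :
    ∫⁻ z : EuclideanSpace ℝ (Fin d), ENNReal.ofReal (Real.exp (-a * ‖z‖^2)) =
      ENNReal.ofReal ((Real.pi / a) ^ ((d:ℝ)/2)) := by
  rw [← MeasureTheory.ofReal_integral_eq_lintegral_ofReal (gauss_integrable d a ha)
    (Eventually.of_forall fun z => (Real.exp_pos _).le)]
  congr 1
  have := GaussianFourier.integral_rexp_neg_mul_sq_norm (V := EuclideanSpace ℝ (Fin d)) ha
  rw [this, finrank_euclideanSpace_fin]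

lemma gauss_lint' (d : ℕ) (b t : ℝ) (hb : 0 < b) (ht : 0 < t) :
    ∫⁻ z : EuclideanSpace ℝ (Fin d),
      ENNReal.ofReal (t ^ (-(d:ℝ)/2) * Real.exp (-b * ‖z‖^2 / t)) =
      ENNReal.ofReal (t ^ (-(d:ℝ)/2) * (Real.pi * t / b) ^ ((d:ℝ)/2)) := by
  have h1 : ∀ z : EuclideanSpace ℝ (Fin d),
      ENNReal.ofReal (t ^ (-(d:ℝ)/2) * Real.exp (-b * ‖z‖^2 / t)) =
      ENNReal.ofReal (t ^ (-(d:ℝ)/2)) * ENNReal.ofReal (Real.exp (-(b/t) * ‖z‖^2)) := by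
    intro z
    rw [← ENNReal.ofReal_mul (by positivity)]
    congr 2
    ring
  simp_rw [h1]
  rw [lintegral_const_mul' _ _ ENNReal.ofReal_ne_top, gauss_lint d (b/t) (by positivity)]
  rw [← ENNReal.ofReal_mul (by positivity)]
  congr 2
  rw [div_div_eq_mul_div]

lemma rpow_cancel_aux (b t : ℝ) (q : ℝ) (hb : 0 < b) (ht : 0 < t) :
    t ^ (-q) * (Real.pi * t / b) ^ q = (Real.pi / b) ^ q := by
  have h1 : Real.pi * t / b = (Real.pi / b) * t := by ring
  rw [h1, Real.mul_rpow (by positivity) ht.le, Real.rpow_neg ht.le]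
  have h2 : t ^ q ≠ 0 := (Real.rpow_pos_of_pos ht q).ne'
  field_simp

lemma tail_tendsto {α : Type*} [MeasurableSpace α] (ν : Measure α) (g : α → ENNReal)
    (hg : Measurable g) (hfin : ∫⁻ y, g y ∂ν ≠ ⊤) (w : α → ℝ) (hw : Measurable w) :
    Tendsto (fun R : ℝ => ∫⁻ y in {y | R < w y}, g y ∂ν) atTop (nhds 0) := by
  have hmR : ∀ R : ℝ, MeasurableSet {y | R < w y} :=
    fun R => measurableSet_lt measurable_const hw
  have heq : ∀ R : ℝ, ∫⁻ y in {y | R < w y}, g y ∂ν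
      = ∫⁻ y, ({y | R < w y}).indicator g y ∂ν :=
    fun R => (lintegral_indicator (hmR R) g).symm
  have hnat : Tendsto (fun n : ℕ => ∫⁻ y in {y | (n:ℝ) < w y}, g y ∂ν) atTop (nhds 0) := by
    have key := tendsto_lintegral_of_dominated_convergence (μ := ν)
      (F := fun (n : ℕ) y => ({y | ((n:ℕ):ℝ) < w y}).indicator g y) (f := fun _ => 0) g
      (fun n => hg.indicator (hmR _))
      (fun n => Eventually.of_forall fun y => Set.indicator_le_self _ _ y)
      hfin
      (Eventually.of_forall fun y => by
        refine Tendsto.congr' ?_ tendsto_const_nhds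
        filter_upwards [eventually_ge_atTop ⌈w y⌉₊] with n hn
        rw [Set.indicator_of_notMem]
        simp only [Set.mem_setOf_eq, not_lt]
        exact le_trans (Nat.le_ceil _) (by exact_mod_cast hn))
    simp only [lintegral_zero] at key
    refine Tendsto.congr (fun n => ?_) key
    exact (heq ((n:ℕ):ℝ)).symm
  apply tendsto_of_tendsto_of_tendsto_of_le_of_le' tendsto_const_nhds
    (hnat.comp tendsto_nat_floor_atTop)
  · exact Eventually.of_forall fun R => zero_le
  · filter_upwards [eventually_ge_atTop (0:ℝ)] with R hR
    exact lintegral_mono_set fun y hy => lt_of_le_of_lt (Nat.floor_le hR) hy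

lemma ofReal_int_le {α : Type*} [MeasurableSpace α] (ν : Measure α) (f : α → ℝ)
    (hf : ∀ x, 0 ≤ f x) :
    ENNReal.ofReal (∫ y, f y ∂ν) ≤ ∫⁻ y, ENNReal.ofReal (f y) ∂ν := by
  by_cases hi : Integrable f ν
  · exact le_of_eq (MeasureTheory.ofReal_integral_eq_lintegral_ofReal hi
      (Eventually.of_forall hf))
  · rw [integral_undef hi]
    simp


lemma znorm_bound (lam t T p Cp s : ℝ) (hlam : 0 < lam) (ht : 0 < t) (htT : t ≤ T)
    (hp : 0 ≤ p) (hs : 0 ≤ s)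
    (hCp : ∀ u : ℝ, 0 ≤ u → u ^ (p/2) * Real.exp (-u) ≤ Cp) :
    s ^ p * Real.exp (-lam * s^2 / (2*t)) ≤ (2*T/lam) ^ (p/2) * Cp := by
  have hT : 0 < T := lt_of_lt_of_le ht htT
  set v : ℝ := lam * s^2 / (2*t) with hv
  have hv0 : 0 ≤ v := by positivity
  have hs2 : s^2 = (2*t/lam) * v := by
    rw [hv]; field_simp
  have hsp : s ^ p = ((2*t/lam) * v) ^ (p/2) := by
    rw [← hs2, ← Real.rpow_natCast s 2, ← Real.rpow_mul hs]
    congr 1; ring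
  have hexp : Real.exp (-lam * s^2 / (2*t)) = Real.exp (-v) := by
    congr 1; rw [hv]; ring
  rw [hsp, hexp, Real.mul_rpow (by positivity) hv0]
  have h1 : (2*t/lam) ^ (p/2) ≤ (2*T/lam) ^ (p/2) := by
    apply Real.rpow_le_rpow (by positivity) _ (by positivity)
    gcongr
  calc (2*t/lam)^(p/2) * v^(p/2) * Real.exp (-v)
      = (2*t/lam)^(p/2) * (v^(p/2) * Real.exp (-v)) := by ring
    _ ≤ (2*T/lam)^(p/2) * (v^(p/2) * Real.exp (-v)) := by
        exact mul_le_mul_of_nonneg_right h1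
          (mul_nonneg (Real.rpow_nonneg hv0 _) (Real.exp_pos _).le)
    _ ≤ (2*T/lam)^(p/2) * Cp := by
        exact mul_le_mul_of_nonneg_left (hCp v hv0) (Real.rpow_nonneg (by positivity) _)

lemma pointwise_real (d : ℕ) (lam t T p R Cz : ℝ) {E : Type*} [SeminormedAddCommGroup E]
    (y z : E) (hlam : 0 < lam) (ht : 0 < t) (htT : t ≤ T) (hp : 0 ≤ p) (hR : 0 ≤ R)
    (hCz0 : 0 ≤ Cz)
    (hk : ‖z‖ ^ p * Real.exp (-lam * ‖z‖^2 / (2*t)) ≤ Cz) :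
    (if R < ‖y + z‖ then ‖y + z‖ ^ p else 0) * (t ^ (-(d:ℝ)/2) * Real.exp (-lam * ‖z‖^2 / t))
      ≤ 2 ^ p * ((if R < 2*‖y‖ then ‖y‖^p * (t ^ (-(d:ℝ)/2) * Real.exp (-lam * ‖z‖^2 / t))
            + Cz * (t ^ (-(d:ℝ)/2) * Real.exp (-lam * ‖z‖^2 / (2*t))) else 0)
          + ‖y‖^p * Real.exp (-(lam * R^2) / (8*T)) * (t ^ (-(d:ℝ)/2) * Real.exp (-lam * ‖z‖^2 / (2*t)))
          + Cz * Real.exp (-(lam * R^2) / (16*T)) * (t ^ (-(d:ℝ)/2) * Real.exp (-lam * ‖z‖^2 / (4*t)))) := by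
  have hT : 0 < T := lt_of_lt_of_le ht htT
  set td : ℝ := t ^ (-(d:ℝ)/2) with htd
  have htd0 : 0 < td := Real.rpow_pos_of_pos ht _
  set E2 : ℝ := Real.exp (-lam * ‖z‖^2 / (2*t)) with hE2
  set E4 : ℝ := Real.exp (-lam * ‖z‖^2 / (4*t)) with hE4
  set e3 : ℝ := Real.exp (-(lam * R^2) / (8*T)) with he3
  set e4 : ℝ := Real.exp (-(lam * R^2) / (16*T)) with he4
  have hE20 : 0 < E2 := Real.exp_pos _
  have hE40 : 0 < E4 := Real.exp_pos _
  have he30 : 0 < e3 := Real.exp_pos _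
  have he40 : 0 < e4 := Real.exp_pos _
  have hY0 : 0 ≤ ‖y‖^p := Real.rpow_nonneg (norm_nonneg y) p
  have hZ0 : 0 ≤ ‖z‖^p := Real.rpow_nonneg (norm_nonneg z) p
  have h2p0 : (0:ℝ) ≤ 2^p := Real.rpow_nonneg (by norm_num) p
  have hsplit2 : Real.exp (-lam * ‖z‖^2 / t) = E2 * E2 := by
    rw [hE2, ← Real.exp_add]; congr 1; field_simp; ring
  have hsplit4 : E2 = E4 * E4 := by
    rw [hE2, hE4, ← Real.exp_add]; congr 1; field_simp; ring
  have hB3 : 0 ≤ ‖y‖^p * e3 * (td * E2) :=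
    mul_nonneg (mul_nonneg hY0 he30.le) (mul_nonneg htd0.le hE20.le)
  have hB4 : 0 ≤ Cz * e4 * (td * E4) :=
    mul_nonneg (mul_nonneg hCz0 he40.le) (mul_nonneg htd0.le hE40.le)
  by_cases hyz : R < ‖y + z‖
  · rw [if_pos hyz]
    have hyzp : ‖y + z‖ ^ p ≤ 2^p * (‖y‖^p + ‖z‖^p) :=
      le_trans (Real.rpow_le_rpow (norm_nonneg _) (norm_add_le y z) hp)
        (aux_2pow p ‖y‖ ‖z‖ hp (norm_nonneg y) (norm_nonneg z))
    have main : ‖y + z‖ ^ p * (td * (E2*E2))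
        ≤ 2^p * (‖y‖^p * (td * (E2*E2)) + ‖z‖^p * (td * (E2*E2))) := by
      have h0 : (0:ℝ) ≤ td * (E2*E2) := mul_nonneg htd0.le (mul_nonneg hE20.le hE20.le)
      calc ‖y + z‖ ^ p * (td * (E2*E2)) ≤ (2^p * (‖y‖^p + ‖z‖^p)) * (td * (E2*E2)) :=
            mul_le_mul_of_nonneg_right hyzp h0
        _ = 2^p * (‖y‖^p * (td * (E2*E2)) + ‖z‖^p * (td * (E2*E2))) := by ring
    by_cases hy : R < 2*‖y‖
    · rw [if_pos hy, hsplit2]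
      have hZk : ‖z‖^p * (td * (E2*E2)) ≤ Cz * (td * E2) := by
        calc ‖z‖^p * (td * (E2*E2)) = (‖z‖^p * E2) * (td * E2) := by ring
          _ ≤ Cz * (td * E2) :=
            mul_le_mul_of_nonneg_right hk (mul_nonneg htd0.le hE20.le)
      calc ‖y + z‖ ^ p * (td * (E2*E2))
          ≤ 2^p * (‖y‖^p * (td * (E2*E2)) + ‖z‖^p * (td * (E2*E2))) := main
        _ ≤ 2^p * ((‖y‖^p * (td * (E2*E2)) + Cz * (td * E2))
              + ‖y‖^p * e3 * (td * E2) + Cz * e4 * (td * E4)) := by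
            apply mul_le_mul_of_nonneg_left _ h2p0
            linarith
    · rw [if_neg hy, hsplit2]
      push_neg at hy
      have hz : R/2 < ‖z‖ := by
        have h := norm_add_le y z
        linarith
      have hz2 : R^2/4 ≤ ‖z‖^2 := by nlinarith
      have hE3le : E2 ≤ e3 := by
        rw [hE2, he3]
        apply Real.exp_le_exp.mpr
        rw [neg_mul, neg_div, neg_div, neg_le_neg_iff, div_le_div_iff₀ (by positivity) (by positivity)]
        have k1 : lam * R^2 * (2*t) ≤ lam * R^2 * (2*T) :=
          mul_le_mul_of_nonneg_left (by linarith) (mul_nonneg hlam.le (sq_nonneg R))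
        have k2 : (lam * (8*T)) * (R^2/4) ≤ (lam * (8*T)) * ‖z‖^2 :=
          mul_le_mul_of_nonneg_left hz2 (by positivity)
        linarith only [k1, k2]
      have hE4le : E4 ≤ e4 := by
        rw [hE4, he4]
        apply Real.exp_le_exp.mpr
        rw [neg_mul, neg_div, neg_div, neg_le_neg_iff, div_le_div_iff₀ (by positivity) (by positivity)]
        have k1 : lam * R^2 * (4*t) ≤ lam * R^2 * (4*T) :=
          mul_le_mul_of_nonneg_left (by linarith) (mul_nonneg hlam.le (sq_nonneg R))
        have k2 : (lam * (16*T)) * (R^2/4) ≤ (lam * (16*T)) * ‖z‖^2 :=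
          mul_le_mul_of_nonneg_left hz2 (by positivity)
        linarith only [k1, k2]
      have hYk : ‖y‖^p * (td * (E2*E2)) ≤ ‖y‖^p * e3 * (td * E2) := by
        calc ‖y‖^p * (td * (E2*E2)) = (‖y‖^p * (td * E2)) * E2 := by ring
          _ ≤ (‖y‖^p * (td * E2)) * e3 :=
            mul_le_mul_of_nonneg_left hE3le
              (mul_nonneg hY0 (mul_nonneg htd0.le hE20.le))
          _ = ‖y‖^p * e3 * (td * E2) := by ring
      have hZk : ‖z‖^p * (td * (E2*E2)) ≤ Cz * e4 * (td * E4) := by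
        calc ‖z‖^p * (td * (E2*E2)) = (‖z‖^p * E2) * E4 * (td * E4) := by
              rw [hsplit4]; ring
          _ ≤ Cz * E4 * (td * E4) :=
            mul_le_mul_of_nonneg_right (mul_le_mul_of_nonneg_right hk hE40.le)
              (mul_nonneg htd0.le hE40.le)
          _ ≤ Cz * e4 * (td * E4) :=
            mul_le_mul_of_nonneg_right (mul_le_mul_of_nonneg_left hE4le hCz0)
              (mul_nonneg htd0.le hE40.le)
      calc ‖y + z‖ ^ p * (td * (E2*E2))
          ≤ 2^p * (‖y‖^p * (td * (E2*E2)) + ‖z‖^p * (td * (E2*E2))) := main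
        _ ≤ 2^p * (0 + ‖y‖^p * e3 * (td * E2) + Cz * e4 * (td * E4)) := by
            apply mul_le_mul_of_nonneg_left _ h2p0
            linarith
  · rw [if_neg hyz, zero_mul]
    apply mul_nonneg h2p0
    have hite : 0 ≤ (if R < 2*‖y‖ then ‖y‖^p * (td * Real.exp (-lam * ‖z‖^2 / t))
        + Cz * (td * E2) else 0) := by
      split
      · have h0 : 0 ≤ td * Real.exp (-lam * ‖z‖^2 / t) :=
          mul_nonneg htd0.le (Real.exp_pos _).le
        have h1 : 0 ≤ td * E2 := mul_nonneg htd0.le hE20.le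
        have := mul_nonneg hY0 h0
        have := mul_nonneg hCz0 h1
        linarith
      · exact le_refl 0
    linarith

lemma pointwise_ennreal (d : ℕ) (lam t T p R Cz : ℝ) {E : Type*} [SeminormedAddCommGroup E]
    (y z : E) (hlam : 0 < lam) (ht : 0 < t) (htT : t ≤ T) (hp : 0 ≤ p) (hR : 0 ≤ R)
    (hCz0 : 0 ≤ Cz)
    (hk : ‖z‖ ^ p * Real.exp (-lam * ‖z‖^2 / (2*t)) ≤ Cz) :
    Set.indicator {x : E | R < ‖x‖} (fun x => ENNReal.ofReal (‖x‖ ^ p)) (y + z)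
        * ENNReal.ofReal (t ^ (-(d:ℝ)/2) * Real.exp (-lam * ‖z‖^2 / t))
      ≤ ENNReal.ofReal (2 ^ p) *
        ((if R < 2*‖y‖ then
            ENNReal.ofReal (‖y‖^p) * ENNReal.ofReal (t ^ (-(d:ℝ)/2) * Real.exp (-lam * ‖z‖^2 / t))
            + ENNReal.ofReal Cz * ENNReal.ofReal (t ^ (-(d:ℝ)/2) * Real.exp (-lam * ‖z‖^2 / (2*t)))
          else 0)
        + ENNReal.ofReal (‖y‖^p * Real.exp (-(lam * R^2) / (8*T)))
            * ENNReal.ofReal (t ^ (-(d:ℝ)/2) * Real.exp (-lam * ‖z‖^2 / (2*t)))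
        + ENNReal.ofReal (Cz * Real.exp (-(lam * R^2) / (16*T)))
            * ENNReal.ofReal (t ^ (-(d:ℝ)/2) * Real.exp (-lam * ‖z‖^2 / (4*t)))) := by
  have hT : 0 < T := lt_of_lt_of_le ht htT
  have htd0 : (0:ℝ) < t ^ (-(d:ℝ)/2) := Real.rpow_pos_of_pos ht _
  have hY0 : (0:ℝ) ≤ ‖y‖^p := Real.rpow_nonneg (norm_nonneg y) p
  have h2p0 : (0:ℝ) ≤ 2^p := Real.rpow_nonneg (by norm_num) p
  have hk1 : (0:ℝ) ≤ t ^ (-(d:ℝ)/2) * Real.exp (-lam * ‖z‖^2 / t) :=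
    mul_nonneg htd0.le (Real.exp_pos _).le
  have hk2 : (0:ℝ) ≤ t ^ (-(d:ℝ)/2) * Real.exp (-lam * ‖z‖^2 / (2*t)) :=
    mul_nonneg htd0.le (Real.exp_pos _).le
  have hk4 : (0:ℝ) ≤ t ^ (-(d:ℝ)/2) * Real.exp (-lam * ‖z‖^2 / (4*t)) :=
    mul_nonneg htd0.le (Real.exp_pos _).le
  have hite0 : (0:ℝ) ≤ (if R < 2*‖y‖ then
      ‖y‖^p * (t ^ (-(d:ℝ)/2) * Real.exp (-lam * ‖z‖^2 / t))
      + Cz * (t ^ (-(d:ℝ)/2) * Real.exp (-lam * ‖z‖^2 / (2*t))) else 0) := by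
    split
    · exact add_nonneg (mul_nonneg hY0 hk1) (mul_nonneg hCz0 hk2)
    · exact le_refl 0
  have hB30 : (0:ℝ) ≤ ‖y‖^p * Real.exp (-(lam * R^2) / (8*T))
      * (t ^ (-(d:ℝ)/2) * Real.exp (-lam * ‖z‖^2 / (2*t))) :=
    mul_nonneg (mul_nonneg hY0 (Real.exp_pos _).le) hk2
  have hB40 : (0:ℝ) ≤ Cz * Real.exp (-(lam * R^2) / (16*T))
      * (t ^ (-(d:ℝ)/2) * Real.exp (-lam * ‖z‖^2 / (4*t))) :=
    mul_nonneg (mul_nonneg hCz0 (Real.exp_pos _).le) hk4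
  calc Set.indicator {x : E | R < ‖x‖} (fun x => ENNReal.ofReal (‖x‖ ^ p)) (y + z)
        * ENNReal.ofReal (t ^ (-(d:ℝ)/2) * Real.exp (-lam * ‖z‖^2 / t))
      = ENNReal.ofReal ((if R < ‖y + z‖ then ‖y + z‖ ^ p else 0)
          * (t ^ (-(d:ℝ)/2) * Real.exp (-lam * ‖z‖^2 / t))) := by
        rw [Set.indicator_apply]
        simp only [Set.mem_setOf_eq]
        split
        · rw [ENNReal.ofReal_mul (Real.rpow_nonneg (norm_nonneg _) p)]
        · simp
    _ ≤ ENNReal.ofReal (2 ^ p * ((if R < 2*‖y‖ then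
            ‖y‖^p * (t ^ (-(d:ℝ)/2) * Real.exp (-lam * ‖z‖^2 / t))
            + Cz * (t ^ (-(d:ℝ)/2) * Real.exp (-lam * ‖z‖^2 / (2*t))) else 0)
          + ‖y‖^p * Real.exp (-(lam * R^2) / (8*T))
              * (t ^ (-(d:ℝ)/2) * Real.exp (-lam * ‖z‖^2 / (2*t)))
          + Cz * Real.exp (-(lam * R^2) / (16*T))
              * (t ^ (-(d:ℝ)/2) * Real.exp (-lam * ‖z‖^2 / (4*t))))) :=
        ENNReal.ofReal_le_ofReal
          (pointwise_real d lam t T p R Cz y z hlam ht htT hp hR hCz0 hk)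
    _ = _ := by
        rw [ENNReal.ofReal_mul h2p0]
        congr 1
        rw [ENNReal.ofReal_add (add_nonneg hite0 hB30) hB40,
          ENNReal.ofReal_add hite0 hB30]
        congr 1
        congr 1
        · split
          · rw [ENNReal.ofReal_add (mul_nonneg hY0 hk1) (mul_nonneg hCz0 hk2),
              ENNReal.ofReal_mul hY0, ENNReal.ofReal_mul hCz0]
          · simp
        · rw [ENNReal.ofReal_mul (mul_nonneg hY0 (Real.exp_pos _).le)]
        · rw [ENNReal.ofReal_mul (mul_nonneg hCz0 (Real.exp_pos _).le)]

theorem stmt7 (d : ℕ) (T lam c p : ℝ) (hT : 0 < T) (hlam : 0 < lam) (hlam1 : lam < 1)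
    (hc : 0 < c) (hp : 1 ≤ p)
    (ν : Measure (EuclideanSpace ℝ (Fin d))) [IsProbabilityMeasure ν]
    (hν : ∫⁻ y, ENNReal.ofReal (‖y‖ ^ p) ∂ν ≠ ⊤)
    (μ : ℝ → Measure (EuclideanSpace ℝ (Fin d)))
    (hprob : ∀ t ∈ Set.Ioc 0 T, IsProbabilityMeasure (μ t))
    (ℓ : ℝ → EuclideanSpace ℝ (Fin d) → ℝ)
    (hmeas : ∀ t ∈ Set.Ioc 0 T, Measurable (ℓ t))
    (hdens : ∀ t ∈ Set.Ioc 0 T,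
      μ t = volume.withDensity (fun x => ENNReal.ofReal (ℓ t x)))
    (hbound : ∀ t ∈ Set.Ioc 0 T, ∀ x, ℓ t x ≤
      c * ∫ y, t ^ (-(d : ℝ) / 2) * Real.exp (-lam * ‖x - y‖ ^ 2 / t) ∂ν) :
    ∃ φ : ℝ → ℝ, (∀ R, 0 ≤ φ R) ∧ Tendsto φ atTop (nhds 0) ∧
      ∀ R ≥ (0 : ℝ), ∀ t ∈ Set.Ioc 0 T,
        (∫ x in {x | R < ‖x‖}, ‖x‖ ^ p ∂(μ t)) ≤ φ R := by
  have hp0 : (0:ℝ) ≤ p := le_trans zero_le_one hp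
  obtain ⟨Cp, hCp0, hCp⟩ := aux_sup (p/2) (by positivity)
  set Cz : ℝ := (2*T/lam) ^ (p/2) * Cp with hCzdef
  have hCz0 : 0 ≤ Cz := mul_nonneg (Real.rpow_nonneg (by positivity) _) hCp0.le
  set K0 : ENNReal := ENNReal.ofReal ((Real.pi / lam) ^ ((d:ℝ)/2)) with hK0
  set K2 : ENNReal := ENNReal.ofReal ((Real.pi * 2 / lam) ^ ((d:ℝ)/2)) with hK2
  set K4 : ENNReal := ENNReal.ofReal ((Real.pi * 4 / lam) ^ ((d:ℝ)/2)) with hK4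
  set Mν : ENNReal := ∫⁻ y, ENNReal.ofReal (‖y‖ ^ p) ∂ν with hMν
  set e3 : ℝ → ℝ := fun R => Real.exp (-(lam * R^2) / (8*T)) with he3
  set e4 : ℝ → ℝ := fun R => Real.exp (-(lam * R^2) / (16*T)) with he4
  set A1 : ℝ → ENNReal :=
    fun R => ∫⁻ y in {y : EuclideanSpace ℝ (Fin d) | R < 2*‖y‖}, ENNReal.ofReal (‖y‖ ^ p) ∂ν
    with hA1
  set A2 : ℝ → ENNReal := fun R => ν {y : EuclideanSpace ℝ (Fin d) | R < 2*‖y‖} with hA2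
  set Ψ : ℝ → ENNReal := fun R => ENNReal.ofReal c * (ENNReal.ofReal (2 ^ p) *
      ((A1 R * K0 + (ENNReal.ofReal Cz * K2) * A2 R)
        + Mν * (ENNReal.ofReal (e3 R) * K2)
        + ENNReal.ofReal (Cz * e4 R) * K4)) with hΨ
  have hYm : Measurable fun y : EuclideanSpace ℝ (Fin d) => ENNReal.ofReal (‖y‖ ^ p) :=
    (measurable_norm.pow_const p).ennreal_ofReal
  have hsm : ∀ R : ℝ, MeasurableSet {y : EuclideanSpace ℝ (Fin d) | R < 2*‖y‖} :=
    fun R => measurableSet_lt measurable_const (measurable_norm.const_mul 2)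
  -- finiteness of Ψ
  have hA1fin : ∀ R, A1 R ≠ ⊤ :=
    fun R => ne_top_of_le_ne_top hν (setLIntegral_le_lintegral _ _)
  have hΨfin : ∀ R, Ψ R ≠ ⊤ := by
    intro R
    rw [hΨ]
    apply ENNReal.mul_ne_top ENNReal.ofReal_ne_top
    apply ENNReal.mul_ne_top ENNReal.ofReal_ne_top
    refine ENNReal.add_ne_top.mpr ⟨ENNReal.add_ne_top.mpr ⟨ENNReal.add_ne_top.mpr
      ⟨?_, ?_⟩, ?_⟩, ?_⟩
    · exact ENNReal.mul_ne_top (hA1fin R) ENNReal.ofReal_ne_top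
    · exact ENNReal.mul_ne_top
        (ENNReal.mul_ne_top ENNReal.ofReal_ne_top ENNReal.ofReal_ne_top) (measure_ne_top ν _)
    · exact ENNReal.mul_ne_top hν
        (ENNReal.mul_ne_top ENNReal.ofReal_ne_top ENNReal.ofReal_ne_top)
    · exact ENNReal.mul_ne_top ENNReal.ofReal_ne_top ENNReal.ofReal_ne_top
  -- tendsto
  have hΨ0 : Tendsto Ψ atTop (nhds 0) := by
    have h1 : Tendsto A1 atTop (nhds 0) :=
      tail_tendsto ν _ hYm hν (fun y => 2*‖y‖) (measurable_norm.const_mul 2)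
    have h2 : Tendsto A2 atTop (nhds 0) := by
      have := tail_tendsto ν (fun _ => 1) measurable_const
        (by simp : ∫⁻ _, (1:ENNReal) ∂ν ≠ ⊤) (fun y : EuclideanSpace ℝ (Fin d) => 2*‖y‖)
        (measurable_norm.const_mul 2)
      refine Tendsto.congr (fun R => ?_) this
      rw [setLIntegral_one]
    have hsq : Tendsto (fun R : ℝ => lam * R^2) atTop atTop :=
      Tendsto.const_mul_atTop hlam (tendsto_pow_atTop (by norm_num))
    have h3r : Tendsto e3 atTop (nhds 0) := by
      have harg : Tendsto (fun R : ℝ => lam * R^2 / (8*T)) atTop atTop :=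
        Tendsto.atTop_div_const (by positivity) hsq
      have := Real.tendsto_exp_neg_atTop_nhds_zero.comp harg
      refine Tendsto.congr (fun R => ?_) this
      rw [he3]
      simp only [Function.comp_apply, neg_div]
    have h4r : Tendsto e4 atTop (nhds 0) := by
      have harg : Tendsto (fun R : ℝ => lam * R^2 / (16*T)) atTop atTop :=
        Tendsto.atTop_div_const (by positivity) hsq
      have := Real.tendsto_exp_neg_atTop_nhds_zero.comp harg
      refine Tendsto.congr (fun R => ?_) this
      rw [he4]
      simp only [Function.comp_apply, neg_div]
    have t1 : Tendsto (fun R => A1 R * K0) atTop (nhds 0) := by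
      simpa using ENNReal.Tendsto.mul_const h1 (Or.inr ENNReal.ofReal_ne_top)
    have t2 : Tendsto (fun R => (ENNReal.ofReal Cz * K2) * A2 R) atTop (nhds 0) := by
      simpa using ENNReal.Tendsto.const_mul h2
        (Or.inr (ENNReal.mul_ne_top ENNReal.ofReal_ne_top ENNReal.ofReal_ne_top))
    have t3 : Tendsto (fun R => Mν * (ENNReal.ofReal (e3 R) * K2)) atTop (nhds 0) := by
      have ha : Tendsto (fun R => ENNReal.ofReal (e3 R) * K2) atTop (nhds 0) := by
        simpa using ENNReal.Tendsto.mul_const (ENNReal.tendsto_ofReal h3r)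
          (Or.inr ENNReal.ofReal_ne_top)
      simpa using ENNReal.Tendsto.const_mul ha (Or.inr hν)
    have t4 : Tendsto (fun R => ENNReal.ofReal (Cz * e4 R) * K4) atTop (nhds 0) := by
      have ha : Tendsto (fun R => Cz * e4 R) atTop (nhds 0) := by
        simpa using h4r.const_mul Cz
      simpa using ENNReal.Tendsto.mul_const (ENNReal.tendsto_ofReal ha)
        (Or.inr ENNReal.ofReal_ne_top)
    have hsum : Tendsto (fun R => (A1 R * K0 + (ENNReal.ofReal Cz * K2) * A2 R)
        + Mν * (ENNReal.ofReal (e3 R) * K2) + ENNReal.ofReal (Cz * e4 R) * K4)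
        atTop (nhds 0) := by
      simpa using ((t1.add t2).add t3).add t4
    have hfin : Tendsto Ψ atTop
        (nhds (ENNReal.ofReal c * (ENNReal.ofReal (2 ^ p) * 0))) :=
      ENNReal.Tendsto.const_mul
        (ENNReal.Tendsto.const_mul hsum (Or.inr ENNReal.ofReal_ne_top))
        (Or.inr ENNReal.ofReal_ne_top)
    simpa using hfin
  -- main bound
  have hkey : ∀ R : ℝ, 0 ≤ R → ∀ t ∈ Set.Ioc (0:ℝ) T,
      ∫⁻ x in {x : EuclideanSpace ℝ (Fin d) | R < ‖x‖}, ENNReal.ofReal (‖x‖ ^ p) ∂(μ t)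
        ≤ Ψ R := by
    intro R hR t htmem
    obtain ⟨ht1, ht2⟩ := htmem
    set S : Set (EuclideanSpace ℝ (Fin d)) := {x | R < ‖x‖} with hSdef
    have hS : MeasurableSet S := measurableSet_lt measurable_const measurable_norm
    have htd0 : (0:ℝ) < t ^ (-(d:ℝ)/2) := Real.rpow_pos_of_pos ht1 _
    set κ : EuclideanSpace ℝ (Fin d) → EuclideanSpace ℝ (Fin d) → ENNReal :=
      fun x y => ENNReal.ofReal (t ^ (-(d:ℝ)/2) * Real.exp (-lam * ‖x - y‖^2 / t)) with hκ
    have hκm : Measurable fun q : EuclideanSpace ℝ (Fin d) × EuclideanSpace ℝ (Fin d) =>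
        ENNReal.ofReal (‖q.1‖ ^ p) * κ q.1 q.2 := by
      apply Measurable.fun_mul
      · exact (measurable_fst.norm.pow_const p).ennreal_ofReal
      · exact ((Real.measurable_exp.comp
          ((((measurable_fst.sub measurable_snd).norm.pow_const 2).const_mul
            (-lam)).div_const t)).const_mul _).ennreal_ofReal
    have hκzm : ∀ a : ℝ, Measurable fun z : EuclideanSpace ℝ (Fin d) =>
        ENNReal.ofReal (t ^ (-(d:ℝ)/2) * Real.exp (-lam * ‖z‖^2 / a)) := by
      intro a
      exact ((Real.measurable_exp.comp
        (((measurable_norm.pow_const 2).const_mul (-lam)).div_const a)).const_mul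
          _).ennreal_ofReal
    have hgauss : ∀ a : ℝ, 0 < a →
        ∫⁻ z : EuclideanSpace ℝ (Fin d),
          ENNReal.ofReal (t ^ (-(d:ℝ)/2) * Real.exp (-lam * ‖z‖^2 / (a*t)))
          = ENNReal.ofReal ((Real.pi * a / lam) ^ ((d:ℝ)/2)) := by
      intro a ha
      have hident : ∀ z : EuclideanSpace ℝ (Fin d),
          ENNReal.ofReal (t ^ (-(d:ℝ)/2) * Real.exp (-lam * ‖z‖^2 / (a*t)))
          = ENNReal.ofReal (t ^ (-(d:ℝ)/2) * Real.exp (-(lam/a) * ‖z‖^2 / t)) := by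
        intro z
        have : -lam * ‖z‖^2 / (a*t) = -(lam/a) * ‖z‖^2 / t := by
          field_simp
        rw [this]
      simp_rw [hident]
      rw [gauss_lint' d (lam/a) t (by positivity) ht1]
      congr 1
      rw [show (-(d:ℝ)/2) = -((d:ℝ)/2) by ring]
      rw [rpow_cancel_aux (lam/a) t ((d:ℝ)/2) (by positivity) ht1]
      congr 1
      rw [div_div_eq_mul_div]
    have hgauss1 : ∫⁻ z : EuclideanSpace ℝ (Fin d),
        ENNReal.ofReal (t ^ (-(d:ℝ)/2) * Real.exp (-lam * ‖z‖^2 / t)) = K0 := by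
      have := hgauss 1 one_pos
      simp only [one_mul, mul_one] at this
      rw [this, hK0]
    have hgauss2 : ∫⁻ z : EuclideanSpace ℝ (Fin d),
        ENNReal.ofReal (t ^ (-(d:ℝ)/2) * Real.exp (-lam * ‖z‖^2 / (2*t))) = K2 :=
      hgauss 2 two_pos
    have hgauss4 : ∫⁻ z : EuclideanSpace ℝ (Fin d),
        ENNReal.ofReal (t ^ (-(d:ℝ)/2) * Real.exp (-lam * ‖z‖^2 / (4*t))) = K4 :=
      hgauss 4 four_pos
    have hk : ∀ z : EuclideanSpace ℝ (Fin d),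
        ‖z‖ ^ p * Real.exp (-lam * ‖z‖^2 / (2*t)) ≤ Cz :=
      fun z => znorm_bound lam t T p Cp ‖z‖ hlam ht1 ht2 hp0 (norm_nonneg z) hCp
    -- inner bound
    have inner_bound : ∀ y : EuclideanSpace ℝ (Fin d),
        ∫⁻ x in S, ENNReal.ofReal (‖x‖ ^ p) * κ x y ∂volume
          ≤ ENNReal.ofReal (2 ^ p) *
            ((if R < 2*‖y‖ then ENNReal.ofReal (‖y‖^p) * K0 + ENNReal.ofReal Cz * K2 else 0)
              + ENNReal.ofReal (‖y‖^p) * (ENNReal.ofReal (e3 R) * K2)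
              + ENNReal.ofReal (Cz * e4 R) * K4) := by
      intro y
      have step1 : ∫⁻ x in S, ENNReal.ofReal (‖x‖ ^ p) * κ x y ∂volume
          = ∫⁻ z, Set.indicator S (fun x => ENNReal.ofReal (‖x‖ ^ p)) (y + z)
              * ENNReal.ofReal (t ^ (-(d:ℝ)/2) * Real.exp (-lam * ‖z‖^2 / t)) ∂volume := by
        rw [← lintegral_indicator hS]
        rw [← lintegral_add_left_eq_self
          (fun x => Set.indicator S (fun x => ENNReal.ofReal (‖x‖ ^ p) * κ x y) x) y]
        congr 1
        funext z
        rw [Set.indicator_apply, Set.indicator_apply]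
        split
        · rw [hκ]
          simp only [add_sub_cancel_left]
        · rw [zero_mul]
      rw [step1]
      calc ∫⁻ z, Set.indicator S (fun x => ENNReal.ofReal (‖x‖ ^ p)) (y + z)
              * ENNReal.ofReal (t ^ (-(d:ℝ)/2) * Real.exp (-lam * ‖z‖^2 / t)) ∂volume
          ≤ ∫⁻ z, ENNReal.ofReal (2 ^ p) *
              ((if R < 2*‖y‖ then
                  ENNReal.ofReal (‖y‖^p)
                    * ENNReal.ofReal (t ^ (-(d:ℝ)/2) * Real.exp (-lam * ‖z‖^2 / t))
                  + ENNReal.ofReal Cz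
                    * ENNReal.ofReal (t ^ (-(d:ℝ)/2) * Real.exp (-lam * ‖z‖^2 / (2*t)))
                else 0)
              + ENNReal.ofReal (‖y‖^p * e3 R)
                  * ENNReal.ofReal (t ^ (-(d:ℝ)/2) * Real.exp (-lam * ‖z‖^2 / (2*t)))
              + ENNReal.ofReal (Cz * e4 R)
                  * ENNReal.ofReal (t ^ (-(d:ℝ)/2) * Real.exp (-lam * ‖z‖^2 / (4*t)))) ∂volume := by
            apply lintegral_mono
            intro z
            exact pointwise_ennreal d lam t T p R Cz y z hlam ht1 ht2 hp0 hR hCz0 (hk z)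
        _ = ENNReal.ofReal (2 ^ p) *
            ((if R < 2*‖y‖ then ENNReal.ofReal (‖y‖^p) * K0 + ENNReal.ofReal Cz * K2 else 0)
              + ENNReal.ofReal (‖y‖^p) * (ENNReal.ofReal (e3 R) * K2)
              + ENNReal.ofReal (Cz * e4 R) * K4) := by
            rw [lintegral_const_mul' _ _ ENNReal.ofReal_ne_top]
            congr 1
            by_cases hy : R < 2*‖y‖
            · simp only [if_pos hy]
              rw [lintegral_add_left (((hκzm t).const_mul _).fun_add ((hκzm (2*t)).const_mul _)
                |>.fun_add ((hκzm (2*t)).const_mul _)),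
                lintegral_add_left (((hκzm t).const_mul _).fun_add ((hκzm (2*t)).const_mul _)),
                lintegral_add_left ((hκzm t).const_mul _),
                lintegral_const_mul' _ _ ENNReal.ofReal_ne_top,
                lintegral_const_mul' _ _ ENNReal.ofReal_ne_top,
                lintegral_const_mul' _ _ ENNReal.ofReal_ne_top,
                lintegral_const_mul' _ _ ENNReal.ofReal_ne_top,
                hgauss1, hgauss2, hgauss4]
              rw [ENNReal.ofReal_mul (Real.rpow_nonneg (norm_nonneg y) p), mul_assoc]
            · simp only [if_neg hy]
              rw [lintegral_add_left (measurable_const.fun_add ((hκzm (2*t)).const_mul _))]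
              rw [lintegral_add_left measurable_const]
              rw [lintegral_const_mul' _ _ ENNReal.ofReal_ne_top,
                lintegral_const_mul' _ _ ENNReal.ofReal_ne_top,
                hgauss2, hgauss4]
              simp only [lintegral_const, zero_mul, zero_add]
              rw [ENNReal.ofReal_mul (Real.rpow_nonneg (norm_nonneg y) p), mul_assoc]
    -- chain
    calc ∫⁻ x in S, ENNReal.ofReal (‖x‖ ^ p) ∂(μ t)
        = ∫⁻ x in S, ENNReal.ofReal (ℓ t x) * ENNReal.ofReal (‖x‖ ^ p) ∂volume := by
          rw [hdens t ⟨ht1, ht2⟩, restrict_withDensity hS,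
            lintegral_withDensity_eq_lintegral_mul _ ((hmeas t ⟨ht1, ht2⟩).ennreal_ofReal) hYm]
          rfl
      _ ≤ ∫⁻ x in S, (ENNReal.ofReal c * ∫⁻ y, κ x y ∂ν) * ENNReal.ofReal (‖x‖ ^ p) ∂volume := by
          apply lintegral_mono
          intro x
          apply mul_le_mul_left
          calc ENNReal.ofReal (ℓ t x)
              ≤ ENNReal.ofReal (c * ∫ y, t ^ (-(d:ℝ)/2)
                  * Real.exp (-lam * ‖x - y‖^2 / t) ∂ν) :=
                ENNReal.ofReal_le_ofReal (hbound t ⟨ht1, ht2⟩ x)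
            _ = ENNReal.ofReal c * ENNReal.ofReal (∫ y, t ^ (-(d:ℝ)/2)
                  * Real.exp (-lam * ‖x - y‖^2 / t) ∂ν) := ENNReal.ofReal_mul hc.le
            _ ≤ ENNReal.ofReal c * ∫⁻ y, κ x y ∂ν := by
                apply mul_le_mul_right
                exact ofReal_int_le ν _ (fun y => by positivity)
      _ = ENNReal.ofReal c * ∫⁻ y, ∫⁻ x in S, ENNReal.ofReal (‖x‖ ^ p) * κ x y ∂volume ∂ν := by
          have h1 : ∀ x : EuclideanSpace ℝ (Fin d),
              (ENNReal.ofReal c * ∫⁻ y, κ x y ∂ν) * ENNReal.ofReal (‖x‖ ^ p)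
              = ENNReal.ofReal c * ∫⁻ y, ENNReal.ofReal (‖x‖ ^ p) * κ x y ∂ν := by
            intro x
            rw [lintegral_const_mul' _ _ ENNReal.ofReal_ne_top]
            ring
          simp_rw [h1]
          rw [lintegral_const_mul' _ _ ENNReal.ofReal_ne_top]
          congr 1
          exact lintegral_lintegral_swap hκm.aemeasurable
      _ ≤ ENNReal.ofReal c * ∫⁻ y, ENNReal.ofReal (2 ^ p) *
            ((if R < 2*‖y‖ then ENNReal.ofReal (‖y‖^p) * K0 + ENNReal.ofReal Cz * K2 else 0)
              + ENNReal.ofReal (‖y‖^p) * (ENNReal.ofReal (e3 R) * K2)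
              + ENNReal.ofReal (Cz * e4 R) * K4) ∂ν := by
          apply mul_le_mul_right
          exact lintegral_mono inner_bound
      _ = Ψ R := by
          rw [lintegral_const_mul' _ _ ENNReal.ofReal_ne_top]
          rw [hΨ]
          congr 1
          congr 1
          have hite : (fun y : EuclideanSpace ℝ (Fin d) =>
              if R < 2*‖y‖ then ENNReal.ofReal (‖y‖^p) * K0 + ENNReal.ofReal Cz * K2 else 0)
              = fun y => Set.indicator {y : EuclideanSpace ℝ (Fin d) | R < 2*‖y‖}
                  (fun y => ENNReal.ofReal (‖y‖^p) * K0 + ENNReal.ofReal Cz * K2) y := by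
            funext y
            rw [Set.indicator_apply]
            simp only [Set.mem_setOf_eq]
          rw [lintegral_add_right _ (measurable_const)]
          rw [lintegral_add_right _ (hYm.mul_const _)]
          rw [hite, lintegral_indicator (hsm R)]
          rw [lintegral_add_left (hYm.mul_const _)]
          rw [lintegral_mul_const' _ _ ENNReal.ofReal_ne_top,
            setLIntegral_const,
            lintegral_mul_const' _ _
              (ENNReal.mul_ne_top ENNReal.ofReal_ne_top ENNReal.ofReal_ne_top),
            lintegral_const]
          simp only [measure_univ, mul_one]
          rfl
  -- conclude
  refine ⟨fun R => (Ψ R).toReal, fun R => ENNReal.toReal_nonneg, ?_, ?_⟩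
  · have := (ENNReal.tendsto_toReal (ENNReal.zero_ne_top)).comp hΨ0
    exact this
  · intro R hR t htmem
    have hint : ∫ x in {x : EuclideanSpace ℝ (Fin d) | R < ‖x‖}, ‖x‖ ^ p ∂(μ t)
        = (∫⁻ x in {x : EuclideanSpace ℝ (Fin d) | R < ‖x‖},
            ENNReal.ofReal (‖x‖ ^ p) ∂(μ t)).toReal := by
      apply integral_eq_lintegral_of_nonneg_ae
      · exact Eventually.of_forall (fun x => Real.rpow_nonneg (norm_nonneg x) p)
      · exact (measurable_norm.pow_const p).aestronglyMeasurable
    rw [hint]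
    exact ENNReal.toReal_mono (hΨfin R) (hkey R hR t htmem)
end

section
/- Let f : [0,T] → ℝ₊ be bounded measurable and suppose there exist constants A, B ≥ 0 such that f(t) ≤ A + B ∫₀ᵗ (T−s)^{−1/2} f(s) ds for all t ∈ [0,T]. Then sup_{t∈[0,T]} f(t) ≤ A · exp(2B√T). -/
open MeasureTheory intervalIntegral Set

noncomputable def wfn (T t : ℝ) : ℝ := 2 * Real.sqrt T - 2 * Real.sqrt (T - t)

lemma wfn_cont (T : ℝ) : Continuous (wfn T) := by
  unfold wfn; fun_prop

lemma wfn_nonneg {T t : ℝ} (ht : t ∈ Icc 0 T) : 0 ≤ wfn T t := by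
  have : Real.sqrt (T - t) ≤ Real.sqrt T := Real.sqrt_le_sqrt (by linarith [ht.1])
  unfold wfn; linarith

lemma wfn_le (T t : ℝ) : wfn T t ≤ 2 * Real.sqrt T := by
  have := Real.sqrt_nonneg (T - t); unfold wfn; linarith

lemma wfn_zero (T : ℝ) : wfn T 0 = 0 := by simp [wfn]

lemma wfn_hasDeriv {T s : ℝ} (hs : s < T) :
    HasDerivAt (wfn T) ((T - s) ^ (-(1:ℝ)/2)) s := by
  have h0 : (0:ℝ) < T - s := by linarith
  have h1 : HasDerivAt (fun x : ℝ => T - x) (-1) s := (hasDerivAt_id s).const_sub T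
  have h2 : HasDerivAt (fun x : ℝ => Real.sqrt (T - x))
      (1 / (2 * Real.sqrt (T - s)) * (-1)) s :=
    (Real.hasDerivAt_sqrt h0.ne').comp s h1
  have h3 : HasDerivAt (wfn T) (-(2 * (1 / (2 * Real.sqrt (T - s)) * (-1)))) s :=
    (h2.const_mul 2).const_sub _
  convert h3 using 1
  rw [show (-(1:ℝ)/2) = -(1/2) by norm_num, Real.rpow_neg h0.le, ← Real.sqrt_eq_rpow]
  have hs' : Real.sqrt (T - s) ≠ 0 := (Real.sqrt_pos.mpr h0).ne'
  field_simp

lemma ker_int {T t : ℝ} (ht : t ∈ Icc 0 T) :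
    IntervalIntegrable (fun s => (T - s) ^ (-(1:ℝ)/2)) volume 0 t := by
  have h : IntervalIntegrable (fun x : ℝ => x ^ (-(1:ℝ)/2)) volume (T - 0) (T - t) :=
    intervalIntegrable_rpow' (by norm_num)
  simpa using h.comp_sub_left T

lemma ker_mul_int {T t : ℝ} (hT : 0 ≤ T) (ht : t ∈ Icc 0 T) {g : ℝ → ℝ}
    (hg : Measurable g) {C : ℝ} (hbd : ∀ s ∈ Icc 0 T, |g s| ≤ C) :
    IntervalIntegrable (fun s => (T - s) ^ (-(1:ℝ)/2) * g s) volume 0 t := by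
  have hC0 : 0 ≤ C := le_trans (abs_nonneg _) (hbd 0 ⟨le_refl 0, hT⟩)
  apply IntervalIntegrable.mono_fun ((ker_int ht).mul_const C)
  · exact (((measurable_const.sub measurable_id).pow_const _).mul hg).aestronglyMeasurable
  · rw [Filter.EventuallyLE, ae_restrict_iff' measurableSet_uIoc]
    filter_upwards with s hs
    have hsIcc : s ∈ Icc 0 T := by
      rw [Set.uIoc_of_le ht.1] at hs
      exact ⟨hs.1.le, hs.2.trans ht.2⟩
    have hk : 0 ≤ (T - s) ^ (-(1:ℝ)/2) := Real.rpow_nonneg (by linarith [hsIcc.2]) _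
    simp only [norm_mul, Real.norm_eq_abs, abs_of_nonneg hk]
    have h1 : |g s| ≤ C := hbd s hsIcc
    exact mul_le_mul_of_nonneg_left (h1.trans (le_abs_self C)) hk

theorem stmt10 (T A B : ℝ) (hT : 0 ≤ T) (hA : 0 ≤ A) (hB : 0 ≤ B)
    (f : ℝ → ℝ) (hmeas : Measurable f)
    (hnn : ∀ t ∈ Set.Icc 0 T, 0 ≤ f t)
    (hbdd : ∃ M, ∀ t ∈ Set.Icc 0 T, f t ≤ M)
    (hineq : ∀ t ∈ Set.Icc 0 T,
      f t ≤ A + B * ∫ s in (0 : ℝ)..t, (T - s) ^ (-(1 : ℝ) / 2) * f s) :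
    ∀ t ∈ Set.Icc 0 T, f t ≤ A * Real.exp (2 * B * Real.sqrt T) := by
  obtain ⟨M, hM⟩ := hbdd
  set M' := max M 0 with hM'def
  have hM'0 : 0 ≤ M' := le_max_right _ _
  have hfM : ∀ t ∈ Icc 0 T, |f t| ≤ M' := fun t ht => by
    rw [abs_of_nonneg (hnn t ht)]; exact (hM t ht).trans (le_max_left _ _)
  rcases eq_or_lt_of_le hB with rfl | hBpos
  · intro t ht
    have h := hineq t ht
    simp only [zero_mul, add_zero] at h
    have : A * Real.exp (2 * 0 * Real.sqrt T) = A := by norm_num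
    linarith [this ▸ le_refl (A * Real.exp (2 * 0 * Real.sqrt T))]
  · have key : ∀ n : ℕ, ∀ t ∈ Icc 0 T,
        f t ≤ A * Real.exp (B * wfn T t) + M' * (B * wfn T t) ^ n / n.factorial := by
      intro n
      induction n with
      | zero =>
        intro t ht
        have h1 : 0 ≤ A * Real.exp (B * wfn T t) := mul_nonneg hA (Real.exp_pos _).le
        have := hfM t ht
        simp only [pow_zero, Nat.factorial_zero, Nat.cast_one, mul_one, div_one]
        have := abs_le.mp (hfM t ht)
        linarith [this.2]
      | succ n ih =>
        intro t ht
        have ht0 := ht.1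
        have htT := ht.2
        set G : ℝ → ℝ := fun s =>
          A * Real.exp (B * wfn T s) + M' * (B * wfn T s) ^ n / n.factorial with hGdef
        have hGcont : Continuous G := by
          apply Continuous.add
          · exact continuous_const.mul ((continuous_const.mul (wfn_cont T)).rexp)
          · exact (continuous_const.mul ((continuous_const.mul (wfn_cont T)).pow n)).div_const _
        obtain ⟨C, hC⟩ :=
          (isCompact_Icc (a:=(0:ℝ)) (b:=T)).exists_bound_of_continuousOn hGcont.continuousOn
        have hint1 : IntervalIntegrable (fun s => (T - s) ^ (-(1:ℝ)/2) * f s) volume 0 t :=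
          ker_mul_int hT ht hmeas hfM
        have hint2 : IntervalIntegrable (fun s => (T - s) ^ (-(1:ℝ)/2) * G s) volume 0 t :=
          ker_mul_int hT ht hGcont.measurable (fun s hs => hC s hs)
        have hmono : (∫ s in (0:ℝ)..t, (T - s) ^ (-(1:ℝ)/2) * f s)
            ≤ ∫ s in (0:ℝ)..t, (T - s) ^ (-(1:ℝ)/2) * G s := by
          apply intervalIntegral.integral_mono_on ht0 hint1 hint2
          intro s hs
          have hsIcc : s ∈ Icc 0 T := ⟨hs.1, hs.2.trans htT⟩
          have hk : 0 ≤ (T - s) ^ (-(1:ℝ)/2) := Real.rpow_nonneg (by linarith [hsIcc.2]) _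
          exact mul_le_mul_of_nonneg_left (ih s hsIcc) hk
        set F : ℝ → ℝ := fun s =>
          (A / B) * Real.exp (B * wfn T s)
            + M' * B ^ n * (wfn T s) ^ (n + 1) / (n + 1).factorial with hFdef
        have hFcont : ContinuousOn F (Icc 0 t) := by
          apply Continuous.continuousOn
          apply Continuous.add
          · exact continuous_const.mul ((continuous_const.mul (wfn_cont T)).rexp)
          · exact (continuous_const.mul ((wfn_cont T).pow (n+1))).div_const _
        have hFderiv : ∀ s ∈ Ioo 0 t, HasDerivAt F ((T - s) ^ (-(1:ℝ)/2) * G s) s := by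
          intro s hs
          have hsT : s < T := lt_of_lt_of_le hs.2 htT
          have hw := wfn_hasDeriv hsT
          have h1 : HasDerivAt (fun x => Real.exp (B * wfn T x))
              (Real.exp (B * wfn T s) * (B * (T - s) ^ (-(1:ℝ)/2))) s :=
            (hw.const_mul B).exp
          have h2 : HasDerivAt (fun x => (wfn T x) ^ (n + 1))
              ((n + 1 : ℕ) * (wfn T s) ^ n * ((T - s) ^ (-(1:ℝ)/2))) s := hw.pow (n + 1)
          have h3 := (h1.const_mul (A / B)).add
            ((h2.const_mul (M' * B ^ n)).div_const ((n + 1).factorial : ℝ))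
          refine h3.congr_deriv ?_
          have hB0 : B ≠ 0 := hBpos.ne'
          have hfac : ((n+1).factorial : ℝ) = (n+1) * n.factorial := by
            push_cast [Nat.factorial_succ]; ring
          have hfacn : (n.factorial : ℝ) ≠ 0 := Nat.cast_ne_zero.mpr n.factorial_ne_zero
          simp only [hGdef, hfac, mul_pow]
          push_cast
          field_simp
        have hI : (∫ s in (0:ℝ)..t, (T - s) ^ (-(1:ℝ)/2) * G s) = F t - F 0 :=
          integral_eq_sub_of_hasDeriv_right_of_le ht0 hFcont
            (fun s hs => (hFderiv s hs).hasDerivWithinAt) hint2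
        have hF0 : F 0 = A / B := by
          simp [hFdef, wfn_zero]
        have hB0 : B ≠ 0 := hBpos.ne'
        calc f t ≤ A + B * ∫ s in (0:ℝ)..t, (T - s) ^ (-(1:ℝ)/2) * f s := hineq t ht
          _ ≤ A + B * ∫ s in (0:ℝ)..t, (T - s) ^ (-(1:ℝ)/2) * G s := by
              have := mul_le_mul_of_nonneg_left hmono hB
              linarith
          _ = A + B * (F t - F 0) := by rw [hI]
          _ = A * Real.exp (B * wfn T t) + M' * (B * wfn T t) ^ (n+1) / (n+1).factorial := by
              rw [hF0]
              simp only [hFdef]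
              have hfacn1 : (((n+1).factorial : ℕ) : ℝ) ≠ 0 :=
                Nat.cast_ne_zero.mpr (n+1).factorial_ne_zero
              field_simp
              ring
    intro t ht
    have hlim : Filter.Tendsto
        (fun n : ℕ => A * Real.exp (B * wfn T t) + M' * (B * wfn T t) ^ n / n.factorial)
        Filter.atTop (nhds (A * Real.exp (B * wfn T t))) := by
      have h1 := (FloorSemiring.tendsto_pow_div_factorial_atTop (B * wfn T t)).const_mul M'
      have h2 := h1.const_add (A * Real.exp (B * wfn T t))
      simpa [mul_div_assoc] using h2
    have hft : f t ≤ A * Real.exp (B * wfn T t) :=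
      ge_of_tendsto hlim (Filter.Eventually.of_forall fun n => key n t ht)
    have hwle : B * wfn T t ≤ 2 * B * Real.sqrt T := by
      nlinarith [wfn_le T t, wfn_nonneg ht, hBpos]
    calc f t ≤ A * Real.exp (B * wfn T t) := hft
      _ ≤ A * Real.exp (2 * B * Real.sqrt T) :=
        mul_le_mul_of_nonneg_left (Real.exp_le_exp.mpr hwle) hA
end

section
/- Let j ≥ 1, C_j := e^{j−1}, and define h : ℝ₊ → ℝ₊ by h(r) := (ln(C_j + r))^j. Then h is concave on ℝ₊. -/
open Real Set

theorem stmt11 (j : ℝ) (hj : 1 ≤ j) :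
    ConcaveOn ℝ (Set.Ici 0) (fun r : ℝ => Real.log (Real.exp (j - 1) + r) ^ j) := by
  set C : ℝ := Real.exp (j - 1) with hC
  have hC1 : (1 : ℝ) ≤ C := by
    rw [hC]; calc (1:ℝ) = Real.exp 0 := (Real.exp_zero).symm
    _ ≤ Real.exp (j-1) := Real.exp_le_exp.2 (by linarith)
  have hCpos : (0:ℝ) < C := lt_of_lt_of_le one_pos hC1
  -- basic facts for r > 0
  have hpos : ∀ r : ℝ, 0 < r → 1 < C + r := fun r hr => by linarith
  have hLpos : ∀ r : ℝ, 0 < r → 0 < Real.log (C + r) := fun r hr =>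
    Real.log_pos (hpos r hr)
  have hLge : ∀ r : ℝ, 0 < r → j - 1 ≤ Real.log (C + r) := by
    intro r hr
    have : Real.log C ≤ Real.log (C + r) :=
      Real.log_le_log hCpos (by linarith)
    rwa [hC, Real.log_exp] at this
  -- derivative of f
  have hd : ∀ r : ℝ, 0 < r →
      HasDerivAt (fun r : ℝ => Real.log (C + r) ^ j)
        (j * Real.log (C + r) ^ (j - 1) * (C + r)⁻¹) r := by
    intro r hr
    have h1 : HasDerivAt (fun r : ℝ => C + r) 1 r := (hasDerivAt_id r).const_add C
    have hne : C + r ≠ 0 := by positivity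
    have h2 : HasDerivAt (fun r : ℝ => Real.log (C + r)) ((C + r)⁻¹ * 1) r :=
      (Real.hasDerivAt_log hne).comp r h1
    have h3 := (Real.hasDerivAt_rpow_const (x := Real.log (C + r)) (p := j)
      (Or.inr hj)).comp r h2
    simpa [mul_one, mul_assoc, Function.comp_def] using h3
  -- derivative of the derivative (g)
  set g : ℝ → ℝ := fun r => j * Real.log (C + r) ^ (j - 1) * (C + r)⁻¹ with hg
  have hgd : ∀ r : ℝ, 0 < r →
      HasDerivAt g
        (j * (((j - 1) * Real.log (C + r) ^ (j - 2) * (C + r)⁻¹) * (C + r)⁻¹ +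
          Real.log (C + r) ^ (j - 1) * (-(1 / (C + r) ^ 2)))) r := by
    intro r hr
    have h1 : HasDerivAt (fun r : ℝ => C + r) 1 r := (hasDerivAt_id r).const_add C
    have hne : C + r ≠ 0 := by positivity
    have h2 : HasDerivAt (fun r : ℝ => Real.log (C + r)) ((C + r)⁻¹ * 1) r :=
      (Real.hasDerivAt_log hne).comp r h1
    have hA : HasDerivAt (fun r : ℝ => Real.log (C + r) ^ (j - 1))
        ((j - 1) * Real.log (C + r) ^ (j - 1 - 1) * ((C + r)⁻¹ * 1)) r :=
      by have := (Real.hasDerivAt_rpow_const (x := Real.log (C + r)) (p := j - 1)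
        (Or.inl (hLpos r hr).ne')).comp r h2; exact this
    have hB : HasDerivAt (fun r : ℝ => (C + r)⁻¹) (-(1 / (C + r) ^ 2)) r := by
      simpa [neg_div, Pi.inv_def] using h1.inv hne
    have := ((hA.mul hB).const_mul j)
    have hexp : j - 1 - 1 = j - 2 := by ring
    rw [hexp] at this
    simpa only [hg, mul_one, mul_assoc, Pi.mul_def] using this
  have hganti : AntitoneOn g (Ioi 0) := by
    apply antitoneOn_of_deriv_nonpos (convex_Ioi 0)
    · intro r hr
      exact ((hgd r hr).differentiableAt.continuousAt).continuousWithinAt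
    · rw [interior_Ioi]
      intro r hr
      exact (hgd r hr).differentiableAt.differentiableWithinAt
    · rw [interior_Ioi]
      intro r hr
      rw [(hgd r hr).deriv]
      have hne : (0:ℝ) < C + r := by have := hr; simp only [mem_Ioi] at this; linarith
      simp only [mem_Ioi] at hr
      set L := Real.log (C + r) with hL
      have hL0 : 0 < L := hLpos r hr
      have hLg : j - 1 ≤ L := hLge r hr
      have key : (j - 1) * L ^ (j - 2) ≤ L ^ (j - 1) := by
        have : L ^ (j - 1) = L ^ (j - 2) * L := by
          rw [← Real.rpow_add_one hL0.ne' (j - 2)]; ring_nf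
        rw [this]
        have hLp : 0 ≤ L ^ (j - 2) := Real.rpow_nonneg hL0.le _
        calc (j - 1) * L ^ (j - 2) ≤ L * L ^ (j - 2) :=
          mul_le_mul_of_nonneg_right hLg hLp
        _ = L ^ (j - 2) * L := by ring
      have hj0 : 0 ≤ j := by linarith
      have h2 : (0:ℝ) ≤ (C + r)⁻¹ := by positivity
      have expand : ((j - 1) * L ^ (j - 2) * (C + r)⁻¹) * (C + r)⁻¹ +
          L ^ (j - 1) * (-(1 / (C + r) ^ 2)) =
          ((j - 1) * L ^ (j - 2) - L ^ (j - 1)) * ((C + r)⁻¹ * (C + r)⁻¹) := by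
        field_simp
        ring
      rw [expand]
      apply mul_nonpos_of_nonneg_of_nonpos hj0
      apply mul_nonpos_of_nonpos_of_nonneg
      · linarith
      · positivity
  -- assemble
  apply AntitoneOn.concaveOn_of_deriv (convex_Ici 0)
  · -- continuity
    have hrpow : Continuous fun x : ℝ => x ^ j :=
      continuous_iff_continuousAt.2 fun x =>
        Real.continuousAt_rpow_const x j (Or.inr (by linarith))
    apply hrpow.comp_continuousOn
    apply Real.continuousOn_log.comp (by fun_prop)
    intro r hr
    simp only [mem_Ici] at hr
    simp only [Set.mem_compl_iff, Set.mem_singleton_iff]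
    positivity
  · rw [interior_Ici]
    intro r hr
    exact (hd r hr).differentiableAt.differentiableWithinAt
  · rw [interior_Ici]
    intro a ha b hb hab
    rw [(hd a ha).deriv, (hd b hb).deriv]
    exact hganti ha hb hab
end

section
/- Let ξ be a nonnegative random variable and j ≥ 1. Suppose E[e^ξ] ≤ M for some M ≥ 1. Then E[ξ^j] ≤ (ln(e^{j−1} + M))^j. -/
open MeasureTheory

private lemma aux_rpow_le_exp (j u : ℝ) (hj : 0 < j) (hu : 0 ≤ u) :
    u ^ j ≤ Real.exp (j * Real.log j - j) * Real.exp u := by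
  rcases eq_or_lt_of_le hu with h | h
  · rw [← h, Real.zero_rpow hj.ne']
    positivity
  · rw [Real.rpow_def_of_pos h, ← Real.exp_add]
    apply Real.exp_le_exp.mpr
    have hlog : Real.log (u / j) ≤ u / j - 1 := Real.log_le_sub_one_of_pos (by positivity)
    rw [Real.log_div h.ne' hj.ne'] at hlog
    have := mul_le_mul_of_nonneg_left hlog hj.le
    rw [mul_sub, mul_sub, mul_div_cancel₀ _ hj.ne', mul_one] at this
    nlinarith

private lemma aux_antitone_core (j u v : ℝ) (hj1 : 0 ≤ j - 1) (hu : 0 < u) (huv : u ≤ v)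
    (hju : j - 1 ≤ u) :
    v ^ (j - 1) * Real.exp u ≤ u ^ (j - 1) * Real.exp v := by
  have hv : 0 < v := lt_of_lt_of_le hu huv
  rw [Real.rpow_def_of_pos hu, Real.rpow_def_of_pos hv, ← Real.exp_add, ← Real.exp_add]
  apply Real.exp_le_exp.mpr
  have hlog : Real.log (v / u) ≤ v / u - 1 := Real.log_le_sub_one_of_pos (by positivity)
  rw [Real.log_div hv.ne' hu.ne'] at hlog
  have h1 : (j - 1) * (Real.log v - Real.log u) ≤ (j - 1) * (v / u - 1) :=
    mul_le_mul_of_nonneg_left hlog hj1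
  have h2 : (j - 1) * (v / u - 1) ≤ v - u := by
    have hvu : 0 ≤ v / u - 1 := by
      rw [sub_nonneg, le_div_iff₀ hu, one_mul]; exact huv
    calc (j - 1) * (v / u - 1) ≤ u * (v / u - 1) := mul_le_mul_of_nonneg_right hju hvu
      _ = v - u := by field_simp
  nlinarith

theorem stmt12 {Ω : Type*} [MeasurableSpace Ω] (P : Measure Ω) [IsProbabilityMeasure P]
    (ξ : Ω → ℝ) (hmeas : Measurable ξ) (hnn : ∀ ω, 0 ≤ ξ ω)
    (j M : ℝ) (hj : 1 ≤ j) (hM : 1 ≤ M)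
    (hint : Integrable (fun ω => Real.exp (ξ ω)) P)
    (hbd : ∫ ω, Real.exp (ξ ω) ∂P ≤ M) :
    ∫ ω, ξ ω ^ j ∂P ≤ Real.log (Real.exp (j - 1) + M) ^ j := by
  set c := Real.exp (j - 1) with hc
  have hj0 : 0 < j := lt_of_lt_of_le one_pos hj
  have hc1 : 1 ≤ c := Real.one_le_exp (by linarith)
  have hc0 : 0 < c := lt_of_lt_of_le one_pos hc1
  set g : ℝ → ℝ := fun r => Real.log (c + r) ^ j with hgdef
  -- derivative of g on Ioi 1
  have hder : ∀ r ∈ Set.Ioi (1 : ℝ), HasDerivAt g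
      (j * Real.log (c + r) ^ (j - 1) / (c + r)) r := by
    intro r hr
    have hr1 : (1 : ℝ) < r := hr
    have hcr : (0 : ℝ) < c + r := by linarith
    have hlogpos : 0 < Real.log (c + r) := Real.log_pos (by linarith)
    have h1 : HasDerivAt (fun x : ℝ => c + x) 1 r := (hasDerivAt_id r).const_add c
    have h2 : HasDerivAt (fun x : ℝ => Real.log (c + x)) (1 / (c + r)) r := h1.log hcr.ne'
    have h3 := h2.rpow_const (p := j) (Or.inl hlogpos.ne')
    convert h3 using 1
    ring
  -- concavity of g on Ici 1
  have hcont : ContinuousOn g (Set.Ici (1 : ℝ)) := by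
    apply ContinuousOn.rpow_const
    · apply ContinuousOn.log (continuousOn_const.add continuousOn_id)
      intro r hr
      have : (1 : ℝ) ≤ r := hr
      exact ne_of_gt (show (0:ℝ) < Real.exp (j - 1) + r by linarith)
    · intro r _
      exact Or.inr hj0.le
  have hconc : ConcaveOn ℝ (Set.Ici (1 : ℝ)) g := by
    apply AntitoneOn.concaveOn_of_deriv (convex_Ici 1) hcont
    · rw [interior_Ici]
      exact fun r hr => ((hder r hr).differentiableAt).differentiableWithinAt
    · rw [interior_Ici]
      intro a ha b hb hab
      rw [(hder a ha).deriv, (hder b hb).deriv]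
      have ha1 : (1 : ℝ) < a := ha
      have hb1 : (1 : ℝ) < b := hb
      have hca : (0 : ℝ) < c + a := by linarith
      have hcb : (0 : ℝ) < c + b := by linarith
      set u := Real.log (c + a) with hu
      set v := Real.log (c + b) with hv
      have hupos : 0 < u := Real.log_pos (by linarith)
      have huv : u ≤ v := Real.log_le_log hca (by linarith)
      have hju : j - 1 ≤ u := by
        rw [hu, hc]
        calc j - 1 = Real.log (Real.exp (j - 1)) := (Real.log_exp _).symm
          _ ≤ Real.log (Real.exp (j - 1) + a) :=
            Real.log_le_log (Real.exp_pos _) (by linarith)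
      have hcore := aux_antitone_core j u v (by linarith) hupos huv hju
      have hea : c + a = Real.exp u := (Real.exp_log hca).symm
      have heb : c + b = Real.exp v := (Real.exp_log hcb).symm
      rw [hea, heb]
      rw [div_le_div_iff₀ (Real.exp_pos _) (Real.exp_pos _)]
      calc j * v ^ (j - 1) * Real.exp u = j * (v ^ (j - 1) * Real.exp u) := by ring
        _ ≤ j * (u ^ (j - 1) * Real.exp v) := mul_le_mul_of_nonneg_left hcore hj0.le
        _ = j * u ^ (j - 1) * Real.exp v := by ring
  -- pointwise bound ξ^j ≤ g (exp ξ)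
  have hpt : ∀ ω, ξ ω ^ j ≤ g (Real.exp (ξ ω)) := by
    intro ω
    have h1 : ξ ω ≤ Real.log (c + Real.exp (ξ ω)) := by
      calc ξ ω = Real.log (Real.exp (ξ ω)) := (Real.log_exp _).symm
        _ ≤ Real.log (c + Real.exp (ξ ω)) :=
          Real.log_le_log (Real.exp_pos _) (by linarith [hc0])
    exact Real.rpow_le_rpow (hnn ω) h1 hj0.le
  -- upper bound for g (exp ξ)
  set K := Real.exp (j * Real.log j - j) with hK
  have hgb : ∀ ω, g (Real.exp (ξ ω)) ≤ K * (c + Real.exp (ξ ω)) := by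
    intro ω
    have hx : (0 : ℝ) < c + Real.exp (ξ ω) := by positivity
    have hlognn : 0 ≤ Real.log (c + Real.exp (ξ ω)) :=
      Real.log_nonneg (by nlinarith [Real.exp_pos (ξ ω)])
    have := aux_rpow_le_exp j (Real.log (c + Real.exp (ξ ω))) hj0 hlognn
    rwa [Real.exp_log hx] at this
  have hgnn : ∀ ω, 0 ≤ g (Real.exp (ξ ω)) := fun ω => le_trans
    (Real.rpow_nonneg (hnn ω) j) (hpt ω)
  -- integrability
  have hKint : Integrable (fun ω => K * (c + Real.exp (ξ ω))) P :=
    ((integrable_const c).add hint).const_mul K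
  have hmg : Measurable fun ω => g (Real.exp (ξ ω)) := by
    apply Measurable.pow _ measurable_const
    exact ((hmeas.exp.const_add c).log)
  have hgi : Integrable (fun ω => g (Real.exp (ξ ω))) P := by
    apply hKint.mono hmg.aestronglyMeasurable
    filter_upwards with ω
    rw [Real.norm_eq_abs, Real.norm_eq_abs, abs_of_nonneg (hgnn ω),
      abs_of_nonneg (by positivity : (0:ℝ) ≤ K * (c + Real.exp (ξ ω)))]
    exact hgb ω
  have hxint : Integrable (fun ω => ξ ω ^ j) P := by
    apply hgi.mono
    · exact (hmeas.pow measurable_const).aestronglyMeasurable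
    · filter_upwards with ω
      rw [Real.norm_eq_abs, Real.norm_eq_abs, abs_of_nonneg (Real.rpow_nonneg (hnn ω) j),
        abs_of_nonneg (hgnn ω)]
      exact hpt ω
  -- step 1 : ∫ ξ^j ≤ ∫ g (exp ξ)
  have step1 : ∫ ω, ξ ω ^ j ∂P ≤ ∫ ω, g (Real.exp (ξ ω)) ∂P :=
    integral_mono hxint hgi hpt
  -- step 2 : Jensen
  have step2 : ∫ ω, g (Real.exp (ξ ω)) ∂P ≤ g (∫ ω, Real.exp (ξ ω) ∂P) := by
    apply hconc.le_map_integral hcont isClosed_Ici _ hint hgi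
    exact Filter.Eventually.of_forall fun ω => Real.one_le_exp (hnn ω)
  -- step 3 : monotonicity
  have hm0 : 0 ≤ ∫ ω, Real.exp (ξ ω) ∂P :=
    integral_nonneg fun ω => (Real.exp_pos _).le
  have step3 : g (∫ ω, Real.exp (ξ ω) ∂P) ≤ Real.log (c + M) ^ j := by
    apply Real.rpow_le_rpow
    · exact Real.log_nonneg (by linarith)
    · exact Real.log_le_log (by linarith) (by linarith)
    · exact hj0.le
  linarith
end
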